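/- Let Ω ⊂ ℝⁿ be a bounded domain, f ∈ C²([0,1)), and let u ∈ C²(Ω) with 0 ≤ u < 1 solve −Δu = f(u) in Ω and satisfy the stability inequality ∫_Ω (|∇ξ|² − f′(u)ξ²) dx ≥ 0 for every Lipschitz function ξ with compact support in Ω. Then for every c ∈ C²(Ω) and every Lipschitz function η with compact support in Ω one has ∫_Ω (Δc + f′(u)c) c η² dx ≤ ∫_Ω c² |∇η|² dx. -/

import Mathlib

open MeasureTheory Set Filter Topology Bornology Metric

/-- The Laplacian of `u : ℝⁿ → ℝ`, as the sum of second partial derivatives. -/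
noncomputable def lap {n : ℕ} (u : EuclideanSpace ℝ (Fin n) → ℝ)
    (x : EuclideanSpace ℝ (Fin n)) : ℝ :=
  ∑ i, fderiv ℝ (fun y => fderiv ℝ u y (EuclideanSpace.single i 1)) x (EuclideanSpace.single i 1)

/-- `f` is of class `C²([0,1))`, with first and second derivatives `f'`, `f''`. -/
def C2On01 (f f' f'' : ℝ → ℝ) : Prop :=
  (∀ t ∈ Ico (0:ℝ) 1, HasDerivWithinAt f (f' t) (Ico (0:ℝ) 1) t) ∧
  (∀ t ∈ Ico (0:ℝ) 1, HasDerivWithinAt f' (f'' t) (Ico (0:ℝ) 1) t) ∧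
  ContinuousOn f'' (Ico (0:ℝ) 1)

/-- Stability of a solution `u` of `-Δu = f(u)` in `Ω`: nonnegativity of the second variation of
the energy on all smooth test functions compactly supported in `Ω`. Here `f'` is the derivative
of the nonlinearity. -/
def StableSol {n : ℕ} (f' : ℝ → ℝ) (u : EuclideanSpace ℝ (Fin n) → ℝ)
    (Ω : Set (EuclideanSpace ℝ (Fin n))) : Prop :=
  ∀ ξ : EuclideanSpace ℝ (Fin n) → ℝ, ContDiff ℝ (⊤:ℕ∞) ξ → HasCompactSupport ξ →
    tsupport ξ ⊆ Ω →
    0 ≤ ∫ x in Ω, (‖gradient ξ x‖ ^ 2 - f' (u x) * ξ x ^ 2)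


open MeasureTheory Set Filter Topology Bornology Metric Manifold
open scoped RealInnerProductSpace

section Helpers

variable {n : ℕ}

/-- A smooth cutoff: equal to 1 on a neighborhood of the compact set `K`, compactly
supported inside the open set `Ω`. -/
lemma stmt6_exists_cutoff (K Ω : Set (EuclideanSpace ℝ (Fin n))) (hK : IsCompact K)
    (hΩ : IsOpen Ω) (hKΩ : K ⊆ Ω) :
    ∃ χ : EuclideanSpace ℝ (Fin n) → ℝ, ContDiff ℝ (⊤:ℕ∞) χ ∧ HasCompactSupport χ ∧
      tsupport χ ⊆ Ω ∧ ∃ U, IsOpen U ∧ K ⊆ U ∧ ∀ x ∈ U, χ x = 1 := by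
  obtain ⟨δ, δpos, hδ⟩ := hK.exists_cthickening_subset_open hΩ hKΩ
  have hsub : cthickening (δ/2) K ⊆ thickening δ K :=
    cthickening_subset_thickening' δpos (by linarith) K
  have hd : Disjoint ((thickening δ K)ᶜ) (cthickening (δ/2) K) :=
    disjoint_compl_left_iff.2 hsub
  obtain ⟨f, hf0, hf1, hf01⟩ := exists_contMDiffMap_zero_one_of_isClosed (n := ⊤)
    (𝓘(ℝ, EuclideanSpace ℝ (Fin n)))
    (isOpen_thickening.isClosed_compl) isClosed_cthickening hd
  have hsupp : Function.support (f : EuclideanSpace ℝ (Fin n) → ℝ) ⊆ cthickening δ K := by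
    intro x hx
    by_contra hxc
    exact hx (hf0 (fun h => hxc (thickening_subset_cthickening δ K h)))
  refine ⟨f, ?_, ?_, ?_, thickening (δ/2) K, isOpen_thickening,
    self_subset_thickening (by linarith) K, fun x hx => hf1 (thickening_subset_cthickening _ K hx)⟩
  · exact contMDiff_iff_contDiff.1 f.contMDiff
  · exact HasCompactSupport.of_support_subset_isCompact hK.cthickening hsupp
  · exact (closure_minimal hsupp isClosed_cthickening).trans hδ

/-- A measurable function, bounded and vanishing outside a compact set, is integrable. -/
lemma stmt6_integrable_of_bdd_supp {f : EuclideanSpace ℝ (Fin n) → ℝ}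
    {K : Set (EuclideanSpace ℝ (Fin n))} (hK : IsCompact K)
    (hm : AEStronglyMeasurable f volume) (h0 : ∀ x ∉ K, f x = 0)
    {C : ℝ} (hC : ∀ x, |f x| ≤ C) : Integrable f volume := by
  have hf : f = K.indicator f := by
    ext x
    by_cases hx : x ∈ K
    · simp [hx]
    · simp [hx, h0 x hx]
  rw [hf, integrable_indicator_iff hK.measurableSet]
  exact Measure.integrableOn_of_bounded (ne_of_lt hK.measure_lt_top) hm
    (ae_of_all _ (fun x => by simpa [Real.norm_eq_abs] using hC x))

/-- The product of two bounded Lipschitz functions is Lipschitz. -/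
lemma stmt6_lip_mul {f g : EuclideanSpace ℝ (Fin n) → ℝ}
    (hf : ∃ L : NNReal, LipschitzWith L f) (hg : ∃ L : NNReal, LipschitzWith L g)
    {A B : ℝ} (hA : ∀ x, |f x| ≤ A) (hB : ∀ x, |g x| ≤ B) :
    ∃ L : NNReal, LipschitzWith L (fun x => f x * g x) := by
  obtain ⟨Lf, hf⟩ := hf
  obtain ⟨Lg, hg⟩ := hg
  have hA0 : 0 ≤ A := le_trans (abs_nonneg _) (hA 0)
  have hB0 : 0 ≤ B := le_trans (abs_nonneg _) (hB 0)
  refine ⟨⟨A * Lg + B * Lf, by positivity⟩, LipschitzWith.of_dist_le_mul fun x y => ?_⟩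
  have h1 : |f x * g x - f y * g y| ≤ |f x| * |g x - g y| + |g y| * |f x - f y| := by
    have : f x * g x - f y * g y = f x * (g x - g y) + g y * (f x - f y) := by ring
    rw [this]
    exact (abs_add_le _ _).trans (by rw [abs_mul, abs_mul])
  have h2 : |g x - g y| ≤ Lg * dist x y := by
    have := hg.dist_le_mul x y
    rwa [Real.dist_eq] at this
  have h3 : |f x - f y| ≤ Lf * dist x y := by
    have := hf.dist_le_mul x y
    rwa [Real.dist_eq] at this
  rw [Real.dist_eq]
  calc |f x * g x - f y * g y| ≤ |f x| * |g x - g y| + |g y| * |f x - f y| := h1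
    _ ≤ A * (Lg * dist x y) + B * (Lf * dist x y) := by
        have h4 : |f x| * |g x - g y| ≤ A * (Lg * dist x y) :=
          mul_le_mul (hA x) h2 (abs_nonneg _) hA0
        have h5 : |g y| * |f x - f y| ≤ B * (Lf * dist x y) :=
          mul_le_mul (hB y) h3 (abs_nonneg _) hB0
        linarith
    _ = ((⟨A * Lg + B * Lf, by positivity⟩ : NNReal) : ℝ) * dist x y := by
        push_cast
        ring

/-- Parseval-type identity for partial derivatives and gradients. -/
lemma stmt6_sum_fderiv_mul (φ ψ : EuclideanSpace ℝ (Fin n) → ℝ) (x : EuclideanSpace ℝ (Fin n)) :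
    ∑ i, fderiv ℝ φ x (EuclideanSpace.single i 1) * fderiv ℝ ψ x (EuclideanSpace.single i 1)
      = ⟪gradient φ x, gradient ψ x⟫ := by
  rw [← (EuclideanSpace.basisFun (Fin n) ℝ).sum_inner_mul_inner (gradient φ x) (gradient ψ x)]
  refine Finset.sum_congr rfl fun i _ => ?_
  rw [EuclideanSpace.basisFun_apply, real_inner_comm (gradient ψ x) ((EuclideanSpace.single i 1) : EuclideanSpace ℝ (Fin n))]
  simp [gradient, InnerProductSpace.toDual_symm_apply]

lemma stmt6_norm_gradient (φ : EuclideanSpace ℝ (Fin n) → ℝ) (x : EuclideanSpace ℝ (Fin n)) :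
    ‖gradient φ x‖ = ‖fderiv ℝ φ x‖ := by simp [gradient]

lemma stmt6_gradient_zero {φ : EuclideanSpace ℝ (Fin n) → ℝ} {x : EuclideanSpace ℝ (Fin n)}
    (h : x ∉ tsupport φ) : gradient φ x = 0 := by
  have : fderiv ℝ φ x = 0 := by
    by_contra hne
    exact h (support_fderiv_subset ℝ (Function.mem_support.2 hne))
  simp [gradient, this]

end Helpers


/-- The rewritten stability inequality: if `u` solves `-Δu = f(u)` in a bounded
domain `Ω` and is stable with respect to all Lipschitz test functions with compact support
in `Ω`, then for every `c ∈ C²(Ω)` and every Lipschitz `η` with compact support in `Ω`,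
`∫ (Δc + f'(u)c) c η² ≤ ∫ c² |∇η|²`. -/
theorem stmt6 (n : ℕ) (hn : 1 ≤ n) (Ω : Set (EuclideanSpace ℝ (Fin n)))
    (hopen : IsOpen Ω) (hbd : IsBounded Ω) (hconn : IsConnected Ω)
    (f f' f'' : ℝ → ℝ) (hC2 : C2On01 f f' f'')
    (u : EuclideanSpace ℝ (Fin n) → ℝ)
    (hu : ContDiffOn ℝ 2 u Ω)
    (hrange : ∀ x ∈ Ω, 0 ≤ u x ∧ u x < 1)
    (heq : ∀ x ∈ Ω, -lap u x = f (u x))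
    (hstab : ∀ ξ : EuclideanSpace ℝ (Fin n) → ℝ,
      (∃ L : NNReal, LipschitzWith L ξ) → HasCompactSupport ξ → tsupport ξ ⊆ Ω →
      0 ≤ ∫ x in Ω, (‖gradient ξ x‖ ^ 2 - f' (u x) * ξ x ^ 2))
    (c : EuclideanSpace ℝ (Fin n) → ℝ) (hc : ContDiffOn ℝ 2 c Ω)
    (η : EuclideanSpace ℝ (Fin n) → ℝ)
    (hη : ∃ L : NNReal, LipschitzWith L η)
    (hηsupp : HasCompactSupport η) (hηΩ : tsupport η ⊆ Ω) :
    ∫ x in Ω, (lap c x + f' (u x) * c x) * c x * η x ^ 2 ≤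
      ∫ x in Ω, c x ^ 2 * ‖gradient η x‖ ^ 2 := by
    classical
  obtain ⟨Lη, hηlip⟩ := hη
  have hKc : IsCompact (tsupport η) := hηsupp
  obtain ⟨χ, hχs, hχc, hχΩ, U, hUo, hKU, hχ1⟩ :=
    stmt6_exists_cutoff (tsupport η) Ω hKc hopen hηΩ
  set c' : EuclideanSpace ℝ (Fin n) → ℝ := fun x => χ x * c x with hc'def
  have hχ2 : ContDiff ℝ 2 χ := hχs.of_le (by norm_cast)
  have hc'2 : ContDiff ℝ 2 c' := by
    rw [contDiff_iff_contDiffAt]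
    intro x
    by_cases hx : x ∈ Ω
    · exact hχ2.contDiffAt.mul (hc.contDiffAt (hopen.mem_nhds hx))
    · have hx' : x ∉ tsupport χ := fun h => hx (hχΩ h)
      have hev : c' =ᶠ[𝓝 x] (fun _ => (0:ℝ)) := by
        filter_upwards [notMem_tsupport_iff_eventuallyEq.1 hx'] with y hy
        simp [hc'def, hy]
      exact contDiffAt_const.congr_of_eventuallyEq hev
  have hc'supp : HasCompactSupport c' := hχc.mul_right
  have hc'cont : Continuous c' := hc'2.continuous
  have hc'diff : ∀ x, DifferentiableAt ℝ c' x :=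
    fun x => (hc'2.differentiable (by norm_num)).differentiableAt
  have hcc' : ∀ x ∈ U, c' x = c x := fun x hx => by simp [hc'def, hχ1 x hx]
  have hfdU : ∀ x ∈ U, fderiv ℝ c' x = fderiv ℝ c x := fun x hx =>
    Filter.EventuallyEq.fderiv_eq (eventually_of_mem (hUo.mem_nhds hx) hcc')
  have hlapU : ∀ x ∈ U, lap c' x = lap c x := by
    intro x hx
    refine Finset.sum_congr rfl fun i _ => ?_
    have hev : (fun y => fderiv ℝ c' y (EuclideanSpace.single i 1))
        =ᶠ[𝓝 x] (fun y => fderiv ℝ c y (EuclideanSpace.single i 1)) :=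
      eventually_of_mem (hUo.mem_nhds hx) (fun y hy => by simp only [hfdU y hy])
    rw [hev.fderiv_eq]
  -- the test function and auxiliary products
  set ξ : EuclideanSpace ℝ (Fin n) → ℝ := fun x => c' x * η x with hξdef
  set g : EuclideanSpace ℝ (Fin n) → ℝ := fun x => ξ x * η x with hgdef
  have hηcont : Continuous η := hηlip.continuous
  have hξcont : Continuous ξ := hc'cont.mul hηcont
  have hgcont : Continuous g := hξcont.mul hηcont
  have hξsupp : HasCompactSupport ξ := hηsupp.mul_left
  have hgsupp : HasCompactSupport g := hηsupp.mul_left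
  -- bounds
  obtain ⟨Bc, hBc0⟩ := hc'supp.exists_bound_of_continuous hc'cont
  obtain ⟨Bη, hBη0⟩ := hηsupp.exists_bound_of_continuous hηcont
  obtain ⟨Bξ, hBξ0⟩ := hξsupp.exists_bound_of_continuous hξcont
  have hBc : ∀ x, |c' x| ≤ Bc := fun x => by simpa [Real.norm_eq_abs] using hBc0 x
  have hBη : ∀ x, |η x| ≤ Bη := fun x => by simpa [Real.norm_eq_abs] using hBη0 x
  have hBξ : ∀ x, |ξ x| ≤ Bξ := fun x => by simpa [Real.norm_eq_abs] using hBξ0 x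
  -- Lipschitz properties
  have hc'lip : ∃ L : NNReal, LipschitzWith L c' :=
    hc'2.lipschitzWith_of_hasCompactSupport hc'supp (by norm_num)
  have hξlip : ∃ L : NNReal, LipschitzWith L ξ := stmt6_lip_mul hc'lip ⟨Lη, hηlip⟩ hBc hBη
  have hglip : ∃ L : NNReal, LipschitzWith L g := stmt6_lip_mul hξlip ⟨Lη, hηlip⟩ hBξ hBη
  have hsuppξη : tsupport ξ ⊆ tsupport η := by
    refine closure_mono fun x hx => ?_
    simp only [Function.mem_support] at hx ⊢
    intro h0
    exact hx (by simp [hξdef, h0])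
  have hξΩ : tsupport ξ ⊆ Ω := hsuppξη.trans hηΩ
  have hstab' := hstab ξ hξlip hξsupp hξΩ
  have hae : ∀ᵐ x : EuclideanSpace ℝ (Fin n), DifferentiableAt ℝ η x :=
    hηlip.ae_differentiableAt
  obtain ⟨Lξ, hLξ⟩ := hξlip
  obtain ⟨Lg, hLg⟩ := hglip
  -- the components of the gradient of c'
  have hV1 : ∀ i : Fin n,
      ContDiff ℝ 1 (fun x => fderiv ℝ c' x (EuclideanSpace.single i 1)) :=
    fun i => (hc'2.fderiv_right (by norm_num)).clm_apply contDiff_const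
  have hVsupp : ∀ i : Fin n,
      HasCompactSupport (fun x => fderiv ℝ c' x (EuclideanSpace.single i 1)) := fun i =>
    (hc'supp.fderiv ℝ).comp_left
      (g := fun L : EuclideanSpace ℝ (Fin n) →L[ℝ] ℝ => L (EuclideanSpace.single i 1)) rfl
  have hVcont : ∀ i : Fin n,
      Continuous (fun x => fderiv ℝ c' x (EuclideanSpace.single i 1)) :=
    fun i => (hV1 i).continuous
  have hVlip : ∀ i : Fin n, ∃ L : NNReal,
      LipschitzWith L (fun x => fderiv ℝ c' x (EuclideanSpace.single i 1)) :=
    fun i => (hV1 i).lipschitzWith_of_hasCompactSupport (hVsupp i) one_ne_zero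
  -- integrability facts
  have hfdg_bd : ∀ x, ‖fderiv ℝ g x‖ ≤ Lg := by
    intro x
    by_cases h : DifferentiableAt ℝ g x
    · exact norm_fderiv_le_of_lipschitz ℝ hLg
    · simp [fderiv_zero_of_not_differentiableAt h]
  have hfdξ_bd : ∀ x, ‖fderiv ℝ ξ x‖ ≤ Lξ := by
    intro x
    by_cases h : DifferentiableAt ℝ ξ x
    · exact norm_fderiv_le_of_lipschitz ℝ hLξ
    · simp [fderiv_zero_of_not_differentiableAt h]
  have hfdη_bd : ∀ x, ‖fderiv ℝ η x‖ ≤ Lη := by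
    intro x
    by_cases h : DifferentiableAt ℝ η x
    · exact norm_fderiv_le_of_lipschitz ℝ hηlip
    · simp [fderiv_zero_of_not_differentiableAt h]
  have hfdg0 : ∀ x, x ∉ tsupport g → fderiv ℝ g x = 0 := by
    intro x hx
    by_contra hne
    exact hx (support_fderiv_subset ℝ (Function.mem_support.2 hne))
  have hInt1 : ∀ i : Fin n, Integrable
      (fun x => fderiv ℝ (fun y => fderiv ℝ c' y (EuclideanSpace.single i 1)) x
        (EuclideanSpace.single i 1) * g x) volume := by
    intro i
    refine Continuous.integrable_of_hasCompactSupport ?_ hgsupp.mul_left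
    exact (((hV1 i).continuous_fderiv one_ne_zero).clm_apply continuous_const).mul hgcont
  have hInt2 : ∀ i : Fin n, Integrable
      (fun x => fderiv ℝ g x (EuclideanSpace.single i 1)
        * fderiv ℝ c' x (EuclideanSpace.single i 1)) volume := by
    intro i
    obtain ⟨BV, hBV0⟩ := (hVsupp i).exists_bound_of_continuous (hVcont i)
    have hBV : ∀ x, |fderiv ℝ c' x (EuclideanSpace.single i 1)| ≤ BV :=
      fun x => by simpa [Real.norm_eq_abs] using hBV0 x
    have hBVnn : 0 ≤ BV := le_trans (abs_nonneg _) (hBV 0)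
    refine stmt6_integrable_of_bdd_supp hgsupp ?_ ?_
      (C := Lg * ‖(EuclideanSpace.single i 1 : EuclideanSpace ℝ (Fin n))‖ * BV) ?_
    · exact ((measurable_fderiv_apply_const ℝ g (EuclideanSpace.single i 1)).mul (hVcont i).measurable).aestronglyMeasurable
    · intro x hx
      rw [hfdg0 x hx]
      simp
    · intro x
      rw [abs_mul]
      have h1 : |fderiv ℝ g x (EuclideanSpace.single i 1)|
          ≤ (Lg : ℝ) * ‖(EuclideanSpace.single i 1 : EuclideanSpace ℝ (Fin n))‖ := by
        refine le_trans ?_ (mul_le_mul_of_nonneg_right (hfdg_bd x) (norm_nonneg _))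
        simpa [Real.norm_eq_abs] using (fderiv ℝ g x).le_opNorm (EuclideanSpace.single i 1)
      exact mul_le_mul h1 (hBV x) (abs_nonneg _) (by positivity)
  -- integration by parts
  have hIBPi : ∀ i : Fin n,
      ∫ x, fderiv ℝ (fun y => fderiv ℝ c' y (EuclideanSpace.single i 1)) x
        (EuclideanSpace.single i 1) * g x
      = ∫ x, -(fderiv ℝ g x (EuclideanSpace.single i 1)
          * fderiv ℝ c' x (EuclideanSpace.single i 1)) := by
    intro i
    obtain ⟨LV, hLV⟩ := hVlip i
    have h1 := hLV.integral_lineDeriv_mul_eq (μ := volume) hLg hgsupp (EuclideanSpace.single i 1)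
    have h2 : ∫ x, lineDeriv ℝ (fun y => fderiv ℝ c' y (EuclideanSpace.single i 1)) x
        (EuclideanSpace.single i 1) * g x
        = ∫ x, fderiv ℝ (fun y => fderiv ℝ c' y (EuclideanSpace.single i 1)) x
          (EuclideanSpace.single i 1) * g x :=
      integral_congr_ae (ae_of_all _ fun x => by
        beta_reduce
        rw [(((hV1 i).differentiable one_ne_zero).differentiableAt).lineDeriv_eq_fderiv])
    have h3 : ∫ x, lineDeriv ℝ g x (-(EuclideanSpace.single i 1))
          * fderiv ℝ c' x (EuclideanSpace.single i 1)
        = ∫ x, -(fderiv ℝ g x (EuclideanSpace.single i 1)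
          * fderiv ℝ c' x (EuclideanSpace.single i 1)) := by
      refine integral_congr_ae ?_
      filter_upwards [hae] with x hx
      have hgd : DifferentiableAt ℝ g x := ((hc'diff x).mul hx).mul hx
      beta_reduce
      rw [hgd.lineDeriv_eq_fderiv, map_neg]
      ring
    rw [← h2, h1, h3]
  have hIBP : (∫ x, lap c' x * g x)
      + (∫ x, ∑ i, fderiv ℝ g x (EuclideanSpace.single i 1)
          * fderiv ℝ c' x (EuclideanSpace.single i 1)) = 0 := by
    have e1 : ∫ x, lap c' x * g x
        = ∑ i, ∫ x, fderiv ℝ (fun y => fderiv ℝ c' y (EuclideanSpace.single i 1)) x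
          (EuclideanSpace.single i 1) * g x := by
      rw [← integral_finset_sum _ (fun i _ => hInt1 i)]
      refine integral_congr_ae (ae_of_all _ fun x => ?_)
      beta_reduce
      rw [show lap c' x = ∑ i, fderiv ℝ (fun y => fderiv ℝ c' y (EuclideanSpace.single i 1)) x
        (EuclideanSpace.single i 1) from rfl, Finset.sum_mul]
    have e2 : ∫ x, ∑ i, fderiv ℝ g x (EuclideanSpace.single i 1)
          * fderiv ℝ c' x (EuclideanSpace.single i 1)
        = ∑ i, ∫ x, fderiv ℝ g x (EuclideanSpace.single i 1)
          * fderiv ℝ c' x (EuclideanSpace.single i 1) :=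
      integral_finset_sum _ (fun i _ => hInt2 i)
    rw [e1, e2, ← Finset.sum_add_distrib]
    refine Finset.sum_eq_zero fun i _ => ?_
    rw [hIBPi i, integral_neg]
    ring
  -- a.e. expansion of the squared gradient of the test function
  have hexp : ∀ᵐ x : EuclideanSpace ℝ (Fin n), ‖gradient ξ x‖^2
      = (∑ i, fderiv ℝ g x (EuclideanSpace.single i 1)
          * fderiv ℝ c' x (EuclideanSpace.single i 1)) + c' x^2 * ‖gradient η x‖^2 := by
    filter_upwards [hae] with x hx
    have hcd := hc'diff x
    have hξd : DifferentiableAt ℝ ξ x := hcd.mul hx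
    have F1 : fderiv ℝ ξ x = c' x • fderiv ℝ η x + η x • fderiv ℝ c' x := fderiv_mul hcd hx
    have F2 : fderiv ℝ g x = ξ x • fderiv ℝ η x + η x • fderiv ℝ ξ x := fderiv_mul hξd hx
    have F3 : gradient ξ x = c' x • gradient η x + η x • gradient c' x := by
      simp [gradient, F1]
    have hsum : (∑ i, fderiv ℝ g x (EuclideanSpace.single i 1)
          * fderiv ℝ c' x (EuclideanSpace.single i 1))
        = 2 * c' x * η x * ⟪gradient η x, gradient c' x⟫
          + η x^2 * ⟪gradient c' x, gradient c' x⟫ := by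
      rw [← stmt6_sum_fderiv_mul η c' x, ← stmt6_sum_fderiv_mul c' c' x,
        Finset.mul_sum, Finset.mul_sum, ← Finset.sum_add_distrib]
      refine Finset.sum_congr rfl fun i _ => ?_
      rw [F2, F1]
      simp only [ContinuousLinearMap.add_apply, ContinuousLinearMap.coe_smul',
        Pi.smul_apply, smul_eq_mul, hξdef]
      ring
    rw [F3, norm_add_sq_real, hsum, real_inner_smul_left, real_inner_smul_right,
      norm_smul, norm_smul]
    simp only [Real.norm_eq_abs, mul_pow, sq_abs]
    rw [real_inner_self_eq_norm_sq]
    ring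
  -- integrability of the expansion terms
  have hgradξmeas : AEStronglyMeasurable (fun x => ‖gradient ξ x‖^2) volume := by
    have : (fun x => ‖gradient ξ x‖^2) = fun x => ‖fderiv ℝ ξ x‖^2 := by
      funext x; rw [stmt6_norm_gradient]
    rw [this]
    exact (((measurable_fderiv ℝ ξ).norm).pow_const 2).aestronglyMeasurable
  have hgradηmeas : AEStronglyMeasurable (fun x => c' x^2 * ‖gradient η x‖^2) volume := by
    have : (fun x => c' x^2 * ‖gradient η x‖^2) = fun x => c' x^2 * ‖fderiv ℝ η x‖^2 := by
      funext x; rw [stmt6_norm_gradient]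
    rw [this]
    exact ((hc'cont.pow 2).measurable.mul
      (((measurable_fderiv ℝ η).norm).pow_const 2)).aestronglyMeasurable
  have hBint : Integrable (fun x => ‖gradient ξ x‖^2) volume := by
    refine stmt6_integrable_of_bdd_supp hξsupp hgradξmeas ?_ (C := (Lξ:ℝ)^2) ?_
    · intro x hx
      rw [stmt6_gradient_zero hx]
      simp
    · intro x
      rw [abs_of_nonneg (by positivity), stmt6_norm_gradient]
      exact pow_le_pow_left₀ (norm_nonneg _) (hfdξ_bd x) 2
  have hCint : Integrable (fun x => c' x^2 * ‖gradient η x‖^2) volume := by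
    refine stmt6_integrable_of_bdd_supp hKc hgradηmeas ?_ (C := Bc^2 * (Lη:ℝ)^2) ?_
    · intro x hx
      rw [stmt6_gradient_zero hx]
      simp
    · intro x
      rw [abs_mul, abs_of_nonneg (sq_nonneg (c' x)), abs_of_nonneg (by positivity),
        stmt6_norm_gradient]
      have h1 : c' x ^ 2 ≤ Bc ^ 2 := by
        rw [← sq_abs]
        exact pow_le_pow_left₀ (abs_nonneg _) (hBc x) 2
      have h2 : ‖fderiv ℝ η x‖^2 ≤ (Lη:ℝ)^2 :=
        pow_le_pow_left₀ (norm_nonneg _) (hfdη_bd x) 2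
      exact mul_le_mul h1 h2 (by positivity) (by positivity)
  have hA2int : Integrable (fun x => ∑ i, fderiv ℝ g x (EuclideanSpace.single i 1)
      * fderiv ℝ c' x (EuclideanSpace.single i 1)) volume :=
    integrable_finset_sum _ (fun i _ => hInt2 i)
  have hsplit : ∫ x, ‖gradient ξ x‖^2
      = (∫ x, ∑ i, fderiv ℝ g x (EuclideanSpace.single i 1)
          * fderiv ℝ c' x (EuclideanSpace.single i 1))
        + ∫ x, c' x^2 * ‖gradient η x‖^2 := by
    rw [← integral_add hA2int hCint]
    exact integral_congr_ae (hexp.mono fun x hx => by beta_reduce; exact hx)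
  -- continuity of the nonlinearity along the solution
  have hf'c : ContinuousOn f' (Ico (0:ℝ) 1) := fun t ht =>
    ((hC2.2.1) t ht).continuousWithinAt
  have hacont : ContinuousOn (fun x => f' (u x)) Ω :=
    hf'c.comp (hu.continuousOn) (fun x hx => ⟨(hrange x hx).1, (hrange x hx).2⟩)
  have hη0off : ∀ x, x ∉ tsupport η → η x = 0 := fun x hx =>
    image_eq_zero_of_notMem_tsupport hx
  have haξ : Integrable (fun x => f' (u x) * ξ x ^ 2) volume := by
    have haξcontK : ContinuousOn (fun x => f' (u x) * ξ x^2) (tsupport η) :=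
      (hacont.mono hηΩ).mul ((hξcont.pow 2).continuousOn)
    have haξK : IntegrableOn (fun x => f' (u x) * ξ x^2) (tsupport η) volume :=
      haξcontK.integrableOn_compact hKc
    have heq0 : (fun x => f' (u x) * ξ x^2)
        = (tsupport η).indicator (fun x => f' (u x) * ξ x^2) := by
      ext x
      by_cases hx : x ∈ tsupport η
      · simp [hx]
      · simp [hx, hξdef, hη0off x hx]
    rw [heq0, integrable_indicator_iff hKc.measurableSet]
    exact haξK
  have hstab2 : ∫ x in Ω, f' (u x) * ξ x ^ 2 ≤ ∫ x in Ω, ‖gradient ξ x‖^2 := by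
    rw [integral_sub (hBint.integrableOn) (haξ.integrableOn)] at hstab'
    linarith
  -- conversions between integrals over Ω and over the whole space
  have hsetB : ∫ x in Ω, ‖gradient ξ x‖^2 = ∫ x, ‖gradient ξ x‖^2 :=
    setIntegral_eq_integral_of_forall_compl_eq_zero fun x hx => by
      rw [stmt6_gradient_zero (fun h => hx (hξΩ h))]
      simp
  have hsetA1 : ∫ x in Ω, lap c' x * g x = ∫ x, lap c' x * g x :=
    setIntegral_eq_integral_of_forall_compl_eq_zero fun x hx => by
      have : η x = 0 := hη0off x (fun h => hx (hηΩ h))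
      simp [hgdef, this]
  have hsetC : ∫ x, c' x^2 * ‖gradient η x‖^2 = ∫ x in Ω, c' x^2 * ‖gradient η x‖^2 :=
    (setIntegral_eq_integral_of_forall_compl_eq_zero fun x hx => by
      rw [stmt6_gradient_zero (fun h => hx (hηΩ h))]
      simp).symm
  have hlapcont : Continuous (lap c') := by
    rw [show lap c' = fun x => ∑ i, fderiv ℝ (fun y => fderiv ℝ c' y
      (EuclideanSpace.single i 1)) x (EuclideanSpace.single i 1) from rfl]
    exact continuous_finset_sum _ fun i _ =>
      ((hV1 i).continuous_fderiv one_ne_zero).clm_apply continuous_const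
  have hA1int : Integrable (fun x => lap c' x * g x) volume :=
    (hlapcont.mul hgcont).integrable_of_hasCompactSupport hgsupp.mul_left
  -- the final chain
  calc ∫ x in Ω, (lap c x + f' (u x) * c x) * c x * η x ^ 2
      = ∫ x in Ω, (lap c' x * g x + f' (u x) * ξ x ^ 2) := by
        refine setIntegral_congr_fun hopen.measurableSet (fun x hx => ?_)
        by_cases hxU : x ∈ U
        · have h1 := hcc' x hxU
          have h2 := hlapU x hxU
          simp only [hgdef, hξdef, h1, h2]
          ring
        · have hx0 : η x = 0 := hη0off x (fun h => hxU (hKU h))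
          simp [hgdef, hξdef, hx0]
    _ = (∫ x in Ω, lap c' x * g x) + ∫ x in Ω, f' (u x) * ξ x ^ 2 :=
        integral_add hA1int.integrableOn haξ.integrableOn
    _ ≤ (∫ x in Ω, lap c' x * g x) + ∫ x in Ω, ‖gradient ξ x‖^2 := by linarith
    _ = (∫ x, lap c' x * g x)
        + ((∫ x, ∑ i, fderiv ℝ g x (EuclideanSpace.single i 1)
            * fderiv ℝ c' x (EuclideanSpace.single i 1))
          + ∫ x, c' x^2 * ‖gradient η x‖^2) := by rw [hsetA1, hsetB, hsplit]
    _ = ∫ x, c' x^2 * ‖gradient η x‖^2 := by linarith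
    _ = ∫ x in Ω, c' x^2 * ‖gradient η x‖^2 := hsetC
    _ = ∫ x in Ω, c x ^ 2 * ‖gradient η x‖ ^ 2 := by
        refine setIntegral_congr_fun hopen.measurableSet (fun x hx => ?_)
        by_cases hxU : x ∈ U
        · rw [hcc' x hxU]
        · rw [stmt6_gradient_zero (fun h => hxU (hKU h))]
          simp
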